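/- Let A be a 3×3 normal idempotent matrix with first two columns p = (0, a_{21}, a_{31}) and q = (a_{12}, 0, a_{32}). Then the Cramer vertex w = (-a_{31}, -a_{32}, 0) satisfies d(p, w) = -f_{23} = -(a_{21} + a_{32} - a_{31}), d(q, w) = f_{13} = a_{32} - a_{12} - a_{31}, and d(p,q) = d(p,w) + d(w,q). -/
import Mathlib


/-- Normalized difference: the zero-last-coordinate representative of `p - q`. -/
noncomputable def normDiff (n : ℕ) (p q : Fin (n+1) → ℝ) : Fin (n+1) → ℝ :=
  fun i => (p i - q i) - (p (Fin.last n) - q (Fin.last n))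

/-- The tropical distance on `ℝⁿ/ℝ(1,…,1)`. -/
noncomputable def tdist (n : ℕ) (p q : Fin (n+1) → ℝ) : ℝ :=
  Finset.univ.sup' Finset.univ_nonempty
    (fun ij : Fin (n+1) × Fin (n+1) =>
      max |normDiff n p q ij.1| |normDiff n p q ij.1 - normDiff n p q ij.2|)

/-- For a 3×3 normal idempotent matrix with first two columns
`p = (0,a_{21},a_{31})`, `q = (a_{12},0,a_{32})`, the Cramer vertex
`w = (-a_{31},-a_{32},0)` satisfies `d(p,w) = -(a_{21}+a_{32}-a_{31})`,
`d(q,w) = a_{32}-a_{12}-a_{31}`, and `d(p,q) = d(p,w) + d(w,q)`. -/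
lemma tdist_eval (p q : Fin 3 → ℝ) (v : ℝ)
    (h0 : |normDiff 2 p q 0| ≤ v) (h1 : |normDiff 2 p q 1| ≤ v)
    (h01 : |normDiff 2 p q 0 - normDiff 2 p q 1| ≤ v)
    (i j : Fin 3) (hv : v ≤ max |normDiff 2 p q i| |normDiff 2 p q i - normDiff 2 p q j|) :
    tdist 2 p q = v := by
  have h2 : normDiff 2 p q 2 = 0 := by simp [normDiff, Fin.last]
  have hv0 : 0 ≤ v := le_trans (abs_nonneg _) h0
  have hz : |normDiff 2 p q 2| ≤ v := by rw [h2, abs_zero]; exact hv0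
  have e00 : |normDiff 2 p q 0 - normDiff 2 p q 0| ≤ v := by rw [sub_self, abs_zero]; exact hv0
  have e11 : |normDiff 2 p q 1 - normDiff 2 p q 1| ≤ v := by rw [sub_self, abs_zero]; exact hv0
  have e22 : |normDiff 2 p q 2 - normDiff 2 p q 2| ≤ v := by rw [sub_self, abs_zero]; exact hv0
  have e10 : |normDiff 2 p q 1 - normDiff 2 p q 0| ≤ v := by rw [abs_sub_comm]; exact h01
  have e02 : |normDiff 2 p q 0 - normDiff 2 p q 2| ≤ v := by rw [h2, sub_zero]; exact h0
  have e20 : |normDiff 2 p q 2 - normDiff 2 p q 0| ≤ v := by rw [h2, zero_sub, abs_neg]; exact h0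
  have e12 : |normDiff 2 p q 1 - normDiff 2 p q 2| ≤ v := by rw [h2, sub_zero]; exact h1
  have e21 : |normDiff 2 p q 2 - normDiff 2 p q 1| ≤ v := by rw [h2, zero_sub, abs_neg]; exact h1
  unfold tdist
  apply le_antisymm
  · apply Finset.sup'_le
    rintro ⟨a, b⟩ _
    fin_cases a <;> fin_cases b <;>
      first
      | exact max_le h0 e00 | exact max_le h0 h01 | exact max_le h0 e02
      | exact max_le h1 e10 | exact max_le h1 e11 | exact max_le h1 e12
      | exact max_le hz e20 | exact max_le hz e21 | exact max_le hz e22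
  · exact le_trans hv (Finset.le_sup'
      (fun ij : Fin 3 × Fin 3 =>
        max |normDiff 2 p q ij.1| |normDiff 2 p q ij.1 - normDiff 2 p q ij.2|)
      (Finset.mem_univ (i, j)))

theorem stmt15 (A : Matrix (Fin 3) (Fin 3) ℝ)
    (hdiag : ∀ i, A i i = 0) (hneg : ∀ i j, A i j ≤ 0)
    (hsub : ∀ i j k, A i k + A k j ≤ A i j) :
    let p : Fin 3 → ℝ := fun i => A i 0
    let q : Fin 3 → ℝ := fun i => A i 1
    let w : Fin 3 → ℝ := ![-(A 2 0), -(A 2 1), 0]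
    tdist 2 p w = -(A 1 0 + A 2 1 - A 2 0) ∧
    tdist 2 q w = A 2 1 - A 0 1 - A 2 0 ∧
    tdist 2 p q = tdist 2 p w + tdist 2 w q := by
  intro p q w
  have t1 : A 2 1 + A 1 0 ≤ A 2 0 := hsub 2 0 1
  have t2 : A 2 0 + A 0 1 ≤ A 2 1 := hsub 2 1 0
  have d00 : A 0 0 = 0 := hdiag 0
  have hn01 : A 0 1 ≤ 0 := hneg 0 1
  have hn10 : A 1 0 ≤ 0 := hneg 1 0
  have npw0 : normDiff 2 p w 0 = 0 := by
    simp [normDiff, p, w, Fin.last, d00]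
  have npw1 : normDiff 2 p w 1 = A 1 0 + A 2 1 - A 2 0 := by
    simp [normDiff, p, w, Fin.last]; try ring
  have hpw : tdist 2 p w = -(A 1 0 + A 2 1 - A 2 0) := by
    apply tdist_eval p w _ ?_ ?_ ?_ 1 0 ?_
    · rw [npw0, abs_zero]; linarith
    · rw [npw1, abs_of_nonpos (by linarith)]
    · rw [npw0, npw1, zero_sub, abs_neg, abs_of_nonpos (by linarith)]
    · rw [npw1]; exact le_trans (le_of_eq (abs_of_nonpos (by linarith)).symm) (le_max_left _ _)
  have nqw0 : normDiff 2 q w 0 = A 0 1 + A 2 0 - A 2 1 := by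
    simp [normDiff, q, w, Fin.last]; try ring
  have nqw1 : normDiff 2 q w 1 = 0 := by
    simp [normDiff, q, w, Fin.last, hdiag 1]
  have hqw : tdist 2 q w = A 2 1 - A 0 1 - A 2 0 := by
    apply tdist_eval q w _ ?_ ?_ ?_ 0 1 ?_
    · rw [nqw0, abs_of_nonpos (by linarith)]; linarith
    · rw [nqw1, abs_zero]; linarith
    · rw [nqw0, nqw1, sub_zero, abs_of_nonpos (by linarith)]; linarith
    · rw [nqw0]
      exact le_trans (le_of_eq (by rw [abs_of_nonpos (by linarith)]; ring))
        (le_max_left _ _)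
  have nwq0 : normDiff 2 w q 0 = A 2 1 - A 0 1 - A 2 0 := by
    simp [normDiff, q, w, Fin.last]; try ring
  have nwq1 : normDiff 2 w q 1 = 0 := by
    simp [normDiff, q, w, Fin.last, hdiag 1]
  have hwq : tdist 2 w q = A 2 1 - A 0 1 - A 2 0 := by
    apply tdist_eval w q _ ?_ ?_ ?_ 0 1 ?_
    · rw [nwq0, abs_of_nonneg (by linarith)]
    · rw [nwq1, abs_zero]; linarith
    · rw [nwq0, nwq1, sub_zero, abs_of_nonneg (by linarith)]
    · rw [nwq0]; exact le_trans (le_of_eq (abs_of_nonneg (by linarith)).symm) (le_max_left _ _)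
  have npq0 : normDiff 2 p q 0 = A 2 1 - A 0 1 - A 2 0 := by
    simp [normDiff, p, q, Fin.last, d00]; ring
  have npq1 : normDiff 2 p q 1 = A 1 0 + A 2 1 - A 2 0 := by
    simp [normDiff, p, q, Fin.last, hdiag 1]; ring
  have hpq : tdist 2 p q = -(A 0 1) - A 1 0 := by
    apply tdist_eval p q _ ?_ ?_ ?_ 0 1 ?_
    · rw [npq0, abs_of_nonneg (by linarith)]; linarith
    · rw [npq1, abs_of_nonpos (by linarith)]; linarith
    · rw [npq0, npq1, abs_of_nonneg (by linarith)]; linarith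
    · rw [npq0, npq1]
      exact le_trans (le_of_eq (by rw [abs_of_nonneg (by linarith)]; ring))
        (le_max_right _ _)
  exact ⟨hpw, hqw, by rw [hpq, hpw, hwq]; ring⟩
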